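/- Let (Ω,μ) be a finite measure space, let κ ∈ (0,5) and C > 0, and let f : ℝ → ℝ be a measurable function satisfying |f(s)| ≤ C(1+|s|^{5-κ}) for all s ∈ ℝ. Then there exists a constant C' > 0, depending only on C, κ, and μ(Ω), such that for every t ∈ [0,1] and every measurable u : (0,t) × Ω → ℝ one has ∫₀ᵗ ‖f(u(s,·))‖_{L²(μ)} ds ≤ C'(1 + ‖u‖_{L⁵(0,t;L¹⁰(Ω))}^{5-κ}) · t^{κ/5}, where both sides may equal +∞. -/

import Mathlib

open MeasureTheory
open scoped ENNReal NNReal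

/-- Time-integrated nonlinearity estimate from the proof of Lemma 5.9: on a finite measure
space, if `|f(s)| ≤ C(1+|s|^{5-κ})`, then for every `t ∈ [0,1]` and every measurable
`u : (0,t) × Ω → ℝ`,
`∫₀ᵗ ‖f(u(s,·))‖_{L²(μ)} ds ≤ C'(1 + ‖u‖_{L⁵(0,t;L¹⁰)}^{5-κ}) t^{κ/5}`, with `C'`
depending only on `C`, `κ` and `μ(Ω)`; both sides (values in `ℝ≥0∞`) may be infinite. -/
theorem stmt13 {Ω : Type*} [MeasurableSpace Ω] (μ : Measure Ω) [IsFiniteMeasure μ]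
    (κ C : ℝ) (hκ : 0 < κ) (hκ5 : κ < 5) (hC : 0 < C)
    (f : ℝ → ℝ) (hf : Measurable f)
    (hgrowth : ∀ s : ℝ, |f s| ≤ C * (1 + |s| ^ ((5:ℝ) - κ))) :
    ∃ C' > (0:ℝ), ∀ t ∈ Set.Icc (0:ℝ) 1, ∀ u : ℝ → Ω → ℝ,
      Measurable (Function.uncurry u) →
      (∫⁻ s in Set.Ioo (0:ℝ) t, eLpNorm (f ∘ u s) 2 μ) ≤
        ENNReal.ofReal C' *
          (1 + ((∫⁻ s in Set.Ioo (0:ℝ) t,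
              (eLpNorm (u s) 10 μ) ^ (5:ℝ)) ^ ((1:ℝ)/5)) ^ ((5:ℝ) - κ)) *
          ENNReal.ofReal (t ^ (κ / 5)) := by
  have h5κ : (0:ℝ) < 5 - κ := by linarith
  set A : ℝ≥0∞ := μ Set.univ with hAdef
  have hA : A ≠ ∞ := measure_ne_top μ _
  set a : ℝ := A.toReal with hadef
  have ha0 : 0 ≤ a := ENNReal.toReal_nonneg
  refine ⟨C * (a ^ ((2:ℝ)⁻¹) + a ^ (κ/10) + 1), by positivity, ?_⟩
  rintro t ⟨ht0, ht1⟩ u hu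
  -- pointwise-in-time estimate
  have key : ∀ s : ℝ, eLpNorm (f ∘ u s) 2 μ ≤
      ENNReal.ofReal C *
        (A ^ ((2:ℝ)⁻¹) + (eLpNorm (u s) 10 μ) ^ ((5:ℝ) - κ) * A ^ (κ/10)) := by
    intro s
    have hus : Measurable (u s) := hu.of_uncurry_left
    have h1 : eLpNorm (f ∘ u s) 2 μ ≤
        eLpNorm (fun x => C * (1 + |u s x| ^ ((5:ℝ)-κ))) 2 μ := by
      apply eLpNorm_mono
      intro x
      rw [Real.norm_eq_abs, Real.norm_eq_abs, Function.comp_apply]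
      refine (hgrowth (u s x)).trans (le_abs_self _)
    have h2 : eLpNorm (fun x => C * (1 + |u s x| ^ ((5:ℝ)-κ))) 2 μ
        = ENNReal.ofReal C * eLpNorm (fun x => 1 + |u s x| ^ ((5:ℝ)-κ)) 2 μ := by
      rw [show (fun x => C * (1 + |u s x| ^ ((5:ℝ)-κ)))
          = C • (fun x => 1 + |u s x| ^ ((5:ℝ)-κ)) from rfl,
        eLpNorm_const_smul, Real.enorm_eq_ofReal hC.le]
    have hg_meas : Measurable fun x => |u s x| ^ ((5:ℝ)-κ) :=
      hus.abs.pow measurable_const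
    have h3 : eLpNorm (fun x => 1 + |u s x| ^ ((5:ℝ)-κ)) 2 μ ≤
        eLpNorm (fun _ : Ω => (1:ℝ)) 2 μ + eLpNorm (fun x => |u s x| ^ ((5:ℝ)-κ)) 2 μ :=
      eLpNorm_add_le aestronglyMeasurable_const hg_meas.aestronglyMeasurable one_le_two
    have h4 : eLpNorm (fun _ : Ω => (1:ℝ)) 2 μ ≤ A ^ ((2:ℝ)⁻¹) := by
      have := eLpNorm_le_of_ae_bound (μ := μ) (p := 2) (f := fun _ : Ω => (1:ℝ)) (C := 1)
        (Filter.Eventually.of_forall fun x => by simp)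
      simpa using this
    have h5 : eLpNorm (fun x => |u s x| ^ ((5:ℝ)-κ)) 2 μ ≤
        (eLpNorm (u s) 10 μ) ^ ((5:ℝ) - κ) * A ^ (κ/10) := by
      have habs : (fun x => |u s x| ^ ((5:ℝ)-κ)) = fun x => ‖u s x‖ ^ ((5:ℝ)-κ) := by
        simp [Real.norm_eq_abs]
      rw [habs, eLpNorm_norm_rpow (u s) h5κ]
      have hle : (2 * ENNReal.ofReal ((5:ℝ)-κ) : ℝ≥0∞) ≤ 10 := by
        rw [show ((2:ℝ≥0∞)) = ENNReal.ofReal 2 by norm_num,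
          ← ENNReal.ofReal_mul (by norm_num)]
        rw [show ((10:ℝ≥0∞)) = ENNReal.ofReal 10 by norm_num]
        exact ENNReal.ofReal_le_ofReal (by linarith)
      have := eLpNorm_le_eLpNorm_mul_rpow_measure_univ (μ := μ) hle
        hus.aestronglyMeasurable
      have hmono := ENNReal.rpow_le_rpow this h5κ.le
      rw [ENNReal.mul_rpow_of_nonneg _ _ h5κ.le] at hmono
      refine hmono.trans_eq ?_
      congr 1
      rw [← ENNReal.rpow_mul]
      congr 1
      have htr : (2 * ENNReal.ofReal ((5:ℝ)-κ)).toReal = 2 * (5 - κ) := by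
        rw [ENNReal.toReal_mul, ENNReal.toReal_ofReal h5κ.le]
        norm_num
      rw [htr]
      have h10 : ((10:ℝ≥0∞)).toReal = 10 := by norm_num
      rw [h10]
      field_simp
      ring
    calc eLpNorm (f ∘ u s) 2 μ ≤ _ := h1
      _ = _ := h2
      _ ≤ ENNReal.ofReal C *
          (A ^ ((2:ℝ)⁻¹) + (eLpNorm (u s) 10 μ) ^ ((5:ℝ) - κ) * A ^ (κ/10)) := by
        gcongr
        exact h3.trans (add_le_add h4 h5)
  -- abbreviations
  set Y : ℝ≥0∞ := ∫⁻ s in Set.Ioo (0:ℝ) t, (eLpNorm (u s) 10 μ) ^ (5:ℝ) with hY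
  set Z : ℝ≥0∞ := (Y ^ ((1:ℝ)/5)) ^ ((5:ℝ) - κ) with hZ
  set T : ℝ≥0∞ := ENNReal.ofReal (t ^ (κ/5)) with hT
  -- measurability in time
  have hEmeas : Measurable fun s => eLpNorm (u s) 10 μ := by
    have h10 : ∀ s, eLpNorm (u s) 10 μ
        = (∫⁻ (x : Ω), ((‖u s x‖₊ : ℝ≥0∞) ^ (10:ℝ)) ∂μ) ^ ((10:ℝ)⁻¹) := by
      intro s
      rw [eLpNorm_eq_lintegral_rpow_enorm_toReal (by norm_num) (by norm_num)]
      norm_num [enorm_eq_nnnorm]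
    simp_rw [h10]
    have hm : Measurable fun p : ℝ × Ω => ((‖Function.uncurry u p‖₊ : ℝ≥0∞)) ^ (10:ℝ) :=
      hu.enorm.pow measurable_const
    exact (hm.lintegral_prod_right').pow measurable_const
  have hgmeas : Measurable fun s => (eLpNorm (u s) 10 μ) ^ ((5:ℝ)-κ) :=
    hEmeas.pow measurable_const
  -- Hölder in time
  have holder : (∫⁻ s in Set.Ioo (0:ℝ) t, (eLpNorm (u s) 10 μ) ^ ((5:ℝ)-κ))
      ≤ Z * T := by
    have hpq : Real.HolderConjugate (5/(5-κ)) (5/κ) := by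
      refine Real.holderConjugate_iff.mpr ⟨?_, ?_⟩
      · rw [lt_div_iff₀ h5κ]; linarith
      · rw [inv_div, inv_div]; field_simp; ring
    have H := ENNReal.lintegral_mul_le_Lp_mul_Lq
      (volume.restrict (Set.Ioo (0:ℝ) t)) hpq
      (f := fun s => (eLpNorm (u s) 10 μ) ^ ((5:ℝ)-κ))
      (g := fun _ => 1) hgmeas.aemeasurable aemeasurable_const
    simp only [Pi.mul_apply, mul_one, ENNReal.one_rpow] at H
    have e1 : ∀ s : ℝ, ((eLpNorm (u s) 10 μ) ^ ((5:ℝ)-κ)) ^ ((5:ℝ)/(5-κ))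
        = (eLpNorm (u s) 10 μ) ^ (5:ℝ) := by
      intro s
      rw [← ENNReal.rpow_mul]
      congr 1
      field_simp
    simp_rw [e1] at H
    have e2 : (∫⁻ _ in Set.Ioo (0:ℝ) t, (1:ℝ≥0∞)) = ENNReal.ofReal t := by
      simp [Real.volume_Ioo]
    rw [e2] at H
    refine H.trans_eq ?_
    congr 1
    · rw [hZ, ← ENNReal.rpow_mul, hY]
      congr 1
      field_simp
    · rw [hT, ← ENNReal.ofReal_rpow_of_nonneg ht0 (by positivity)]
      congr 1
      field_simp
  -- t ≤ t^(κ/5) on [0,1]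
  have hto : ENNReal.ofReal t ≤ T := by
    rw [hT]
    apply ENNReal.ofReal_le_ofReal
    rcases eq_or_lt_of_le ht0 with h | h
    · rw [← h, Real.zero_rpow (by positivity)]
    · calc t = t ^ (1:ℝ) := (Real.rpow_one t).symm
        _ ≤ t ^ (κ/5) := Real.rpow_le_rpow_of_exponent_ge h ht1 (by
            rw [div_le_one (by norm_num)]; linarith)
  -- rewrite A-powers as ofReal
  have hP : A ^ ((2:ℝ)⁻¹) = ENNReal.ofReal (a ^ ((2:ℝ)⁻¹)) := by
    rw [hadef, ← ENNReal.ofReal_rpow_of_nonneg ha0 (by norm_num),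
      ENNReal.ofReal_toReal hA]
  have hQ : A ^ (κ/10) = ENNReal.ofReal (a ^ (κ/10)) := by
    rw [hadef, ← ENNReal.ofReal_rpow_of_nonneg ha0 (by positivity),
      ENNReal.ofReal_toReal hA]
  have hQtop : A ^ (κ/10) ≠ ∞ := ENNReal.rpow_ne_top_of_nonneg (by positivity) hA
  calc (∫⁻ s in Set.Ioo (0:ℝ) t, eLpNorm (f ∘ u s) 2 μ)
      ≤ ∫⁻ s in Set.Ioo (0:ℝ) t, ENNReal.ofReal C *
          (A ^ ((2:ℝ)⁻¹) + (eLpNorm (u s) 10 μ) ^ ((5:ℝ)-κ) * A ^ (κ/10)) :=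
        lintegral_mono fun s => key s
    _ = ENNReal.ofReal C * (A ^ ((2:ℝ)⁻¹) * ENNReal.ofReal t
          + (∫⁻ s in Set.Ioo (0:ℝ) t, (eLpNorm (u s) 10 μ) ^ ((5:ℝ)-κ)) * A ^ (κ/10)) := by
        rw [lintegral_const_mul' _ _ ENNReal.ofReal_ne_top,
          lintegral_add_left measurable_const,
          lintegral_mul_const' _ _ hQtop]
        congr 2
        simp [Real.volume_Ioo]
    _ ≤ ENNReal.ofReal C * (A ^ ((2:ℝ)⁻¹) * T + (Z * T) * A ^ (κ/10)) := by
        gcongr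
    _ = (ENNReal.ofReal C * ENNReal.ofReal (a ^ ((2:ℝ)⁻¹))
          + ENNReal.ofReal C * ENNReal.ofReal (a ^ (κ/10)) * Z) * T := by
        rw [hP, hQ]; ring
    _ ≤ (ENNReal.ofReal (C * (a ^ ((2:ℝ)⁻¹) + a ^ (κ/10) + 1)) * 1
          + ENNReal.ofReal (C * (a ^ ((2:ℝ)⁻¹) + a ^ (κ/10) + 1)) * Z) * T := by
        refine mul_le_mul_left (add_le_add ?_ (mul_le_mul_left ?_ Z)) T
        · rw [mul_one, ← ENNReal.ofReal_mul hC.le]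
          apply ENNReal.ofReal_le_ofReal
          nlinarith [Real.rpow_nonneg ha0 (κ/10), Real.rpow_nonneg ha0 ((2:ℝ)⁻¹)]
        · rw [← ENNReal.ofReal_mul hC.le]
          apply ENNReal.ofReal_le_ofReal
          nlinarith [Real.rpow_nonneg ha0 (κ/10), Real.rpow_nonneg ha0 ((2:ℝ)⁻¹)]
    _ = ENNReal.ofReal (C * (a ^ ((2:ℝ)⁻¹) + a ^ (κ/10) + 1)) * (1 + Z) * T := by
        ring
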